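/- If r and v are independent nonnegative real random variables, r has density p_r(x) = 2x·e^{−x²} for x ≥ 0 (Rayleigh), and v has density p_v(z) = (M·sin(π/M))/(π·√(1 − sin²(π/M)z²)) on [0,1], then the product α₁ = r·v has density p_{α₁}(x) = (2M·sin(π/M)/√π)·e^{−sin²(π/M)·x²}·Q(√2·cos(π/M)·x) for x ≥ 0, and 0 for x < 0. -/

import Mathlib

open MeasureTheory ProbabilityTheory Real Set

/-- The Gaussian tail function `Q(x) = (1/√(2π)) ∫_x^∞ e^{-t²/2} dt`. -/
noncomputable def gaussQ (x : ℝ) : ℝ :=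
  (Real.sqrt (2 * Real.pi))⁻¹ * ∫ t in Set.Ioi x, Real.exp (-t ^ 2 / 2)

lemma gaussQ_nonneg (x : ℝ) : 0 ≤ gaussQ x := by
  apply mul_nonneg (by positivity)
  exact setIntegral_nonneg measurableSet_Ioi (fun t _ => (Real.exp_pos _).le)

/-- 1D change of variables for lintegrals. -/
lemma lintegral_image_1d {s : Set ℝ} {f f' : ℝ → ℝ}
    (hs : MeasurableSet s) (hf' : ∀ x ∈ s, HasDerivWithinAt f (f' x) s x)
    (hf : Set.InjOn f s) (g : ℝ → ENNReal) :
    ∫⁻ x in f '' s, g x = ∫⁻ x in s, ENNReal.ofReal |f' x| * g (f x) := by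
  simpa only [ContinuousLinearMap.det_toSpanSingleton] using
    lintegral_image_eq_lintegral_abs_det_fderiv_mul volume hs
      (fun x hx => (hf' x hx).hasFDerivWithinAt) hf g

lemma integral_exp_neg_sq_Ioi (A : ℝ) :
    ∫ t in Set.Ioi A, Real.exp (-t ^ 2) = Real.sqrt Real.pi * gaussQ (Real.sqrt 2 * A) := by
  have h2 : (0:ℝ) < Real.sqrt 2 := by positivity
  have := integral_comp_mul_left_Ioi (fun t => Real.exp (-t ^ 2 / 2)) A h2
  have heq : ∀ x : ℝ, Real.exp (-(Real.sqrt 2 * x) ^ 2 / 2) = Real.exp (-x ^ 2) := by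
    intro x
    congr 1
    rw [mul_pow, Real.sq_sqrt (by norm_num : (0:ℝ) ≤ 2)]
    ring
  simp only [heq] at this
  rw [this, gaussQ]
  rw [show Real.sqrt (2 * Real.pi) = Real.sqrt 2 * Real.sqrt Real.pi from
    Real.sqrt_mul (by norm_num) _]
  have hπ : (0:ℝ) < Real.sqrt Real.pi := by positivity
  field_simp
  ring_nf
  field_simp

lemma lintegral_exp_neg_sq_Ioi (A : ℝ) :
    ∫⁻ t in Set.Ioi A, ENNReal.ofReal (Real.exp (-t ^ 2)) =
      ENNReal.ofReal (Real.sqrt Real.pi * gaussQ (Real.sqrt 2 * A)) := by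
  rw [← integral_exp_neg_sq_Ioi A]
  rw [← ofReal_integral_eq_lintegral_ofReal]
  · have : Integrable (fun t : ℝ => Real.exp (-t ^ 2)) := by
      simpa using integrable_exp_neg_mul_sq (by norm_num : (0:ℝ) < 1)
    exact this.integrableOn
  · exact Filter.Eventually.of_forall fun t => (Real.exp_pos _).le

/-- The key analytic computation for the inner integral. -/
lemma inner_calc (c a b u : ℝ) (hc : 0 ≤ c) (ha : 0 < a) (hb : 0 ≤ b)
    (hab : a ^ 2 + b ^ 2 = 1) (hu : 0 < u) :
    ∫⁻ x, ENNReal.ofReal (if 0 ≤ x then 2 * x * Real.exp (-x ^ 2) else 0) *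
      (ENNReal.ofReal x⁻¹ *
        ENNReal.ofReal (if u / x ∈ Set.Icc (0:ℝ) 1 then
          c / (Real.pi * Real.sqrt (1 - a ^ 2 * (u / x) ^ 2)) else 0)) =
    ENNReal.ofReal (2 * c / Real.sqrt Real.pi *
      Real.exp (-(a ^ 2) * u ^ 2) * gaussQ (Real.sqrt 2 * b * u)) := by
  have ha1 : a ≤ 1 := by nlinarith
  set k := a ^ 2 * u ^ 2 with hk
  have hk0 : 0 ≤ k := by positivity
  have hku : k ≤ u ^ 2 := by nlinarith
  have hbu : 0 ≤ b * u := mul_nonneg hb hu.le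
  set ψ : ℝ → ℝ := fun x => Real.sqrt (x ^ 2 - k) with hψ
  set ψ' : ℝ → ℝ := fun x => x / Real.sqrt (x ^ 2 - k) with hψ'
  set G : ℝ → ENNReal := fun t => ENNReal.ofReal (2 * c / Real.pi * Real.exp (-t ^ 2 - k))
    with hG
  have hsub : ∀ x ∈ Set.Ioi u, 0 < x ^ 2 - k := by
    intro x hx
    have hx' : u < x := hx
    nlinarith
  -- Step 1 : pointwise identification of the integrand
  have huae : ∀ᵐ x : ℝ, x ≠ u := by
    rw [ae_iff]
    have : {x : ℝ | ¬ x ≠ u} = {u} := by ext; simp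
    rw [this]; exact Real.volume_singleton
  have step1 : (fun x => ENNReal.ofReal (if 0 ≤ x then 2 * x * Real.exp (-x ^ 2) else 0) *
      (ENNReal.ofReal x⁻¹ *
        ENNReal.ofReal (if u / x ∈ Set.Icc (0:ℝ) 1 then
          c / (Real.pi * Real.sqrt (1 - a ^ 2 * (u / x) ^ 2)) else 0)))
      =ᵐ[volume] (Set.Ioi u).indicator (fun x => ENNReal.ofReal |ψ' x| * G (ψ x)) := by
    filter_upwards [huae] with x hxu
    rcases lt_or_ge x u with hx | hx
    · -- x < u : both sides vanish
      have hne : x ∉ Set.Ioi u := by simpa using hx.le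
      rw [Set.indicator_of_notMem hne]
      rcases le_or_gt x 0 with hx0 | hx0
      · rcases lt_or_eq_of_le hx0 with hx0' | hx0'
        · rw [if_neg (not_le.mpr hx0')]
          simp
        · subst hx0'
          simp
      · have h1 : (1:ℝ) < u / x := (one_lt_div hx0).mpr hx
        rw [if_neg (show u / x ∉ Set.Icc (0:ℝ) 1 from
          fun h => absurd (Set.mem_Icc.mp h).2 (not_le.mpr h1))]
        simp
    · have hx' : u < x := lt_of_le_of_ne hx (Ne.symm hxu)
      have hx0 : 0 < x := hu.trans hx'
      have hx2k : 0 < x ^ 2 - k := hsub x hx'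
      have hsq : 0 < Real.sqrt (x ^ 2 - k) := Real.sqrt_pos.mpr hx2k
      rw [Set.indicator_of_mem (Set.mem_Ioi.mpr hx' : x ∈ Set.Ioi u)]
      have hmem : u / x ∈ Set.Icc (0:ℝ) 1 :=
        ⟨(div_pos hu hx0).le, (div_le_one hx0).mpr hx'.le⟩
      rw [if_pos hx0.le, if_pos hmem]
      have h1 : 1 - a ^ 2 * (u / x) ^ 2 = (x ^ 2 - k) / x ^ 2 := by
        field_simp
        rw [hk]
      have h2 : Real.sqrt (1 - a ^ 2 * (u / x) ^ 2) = Real.sqrt (x ^ 2 - k) / x := by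
        rw [h1, Real.sqrt_div hx2k.le, Real.sqrt_sq hx0.le]
      have h3 : (ψ x) ^ 2 = x ^ 2 - k := Real.sq_sqrt hx2k.le
      have habs : |ψ' x| = x / Real.sqrt (x ^ 2 - k) := by
        rw [hψ']
        exact abs_of_nonneg (by positivity)
      simp only [hG, habs, h2, hψ, Real.sq_sqrt hx2k.le]
      rw [← ENNReal.ofReal_mul (by positivity),
        ← ENNReal.ofReal_mul (by positivity),
        ← ENNReal.ofReal_mul (by positivity)]
      congr 1
      have hexp : Real.exp (-(x ^ 2 - k) - k) = Real.exp (-x ^ 2) := by ring_nf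
      rw [hexp]
      have hπ := Real.pi_pos
      field_simp
  rw [lintegral_congr_ae step1, lintegral_indicator measurableSet_Ioi]
  -- Step 2 : change of variables
  have hderiv : ∀ x ∈ Set.Ioi u, HasDerivWithinAt ψ (ψ' x) (Set.Ioi u) x := by
    intro x hx
    have hx2k : 0 < x ^ 2 - k := hsub x hx
    have h1 : HasDerivAt (fun y : ℝ => y ^ 2 - k) (2 * x) x := by
      simpa using (hasDerivAt_pow 2 x).sub_const k
    have h2 := (Real.hasDerivAt_sqrt (ne_of_gt hx2k)).comp x h1
    have h3 : ψ' x = 1 / (2 * Real.sqrt (x ^ 2 - k)) * (2 * x) := by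
      rw [hψ']
      have := Real.sqrt_pos.mpr hx2k
      field_simp
    rw [h3]
    exact h2.hasDerivWithinAt
  have hinj : Set.InjOn ψ (Set.Ioi u) := by
    intro x hx y hy hxy
    have hx0 : 0 < x := hu.trans hx
    have hy0 : 0 < y := hu.trans hy
    have h1 : x ^ 2 - k = y ^ 2 - k := by
      have := congrArg (fun t : ℝ => t ^ 2) hxy
      simpa [hψ, Real.sq_sqrt (hsub x hx).le, Real.sq_sqrt (hsub y hy).le] using this
    have h2 : x ^ 2 = y ^ 2 := by linarith
    calc x = Real.sqrt (x ^ 2) := (Real.sqrt_sq hx0.le).symm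
      _ = Real.sqrt (y ^ 2) := by rw [h2]
      _ = y := Real.sqrt_sq hy0.le
  have hb2 : b ^ 2 = 1 - a ^ 2 := by linarith
  have hbusq : (b * u) ^ 2 = u ^ 2 - k := by rw [hk]; nlinarith
  have himg : ψ '' Set.Ioi u = Set.Ioi (b * u) := by
    ext t
    constructor
    · rintro ⟨x, hx, rfl⟩
      have hx' : u < x := hx
      have : b * u = Real.sqrt (u ^ 2 - k) := by rw [← hbusq, Real.sqrt_sq hbu]
      rw [Set.mem_Ioi, this, hψ]
      exact Real.sqrt_lt_sqrt (by nlinarith) (by nlinarith)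
    · intro ht
      have ht' : b * u < t := ht
      have ht0 : 0 ≤ t := le_trans hbu ht'.le
      refine ⟨Real.sqrt (t ^ 2 + k), ?_, ?_⟩
      · rw [Set.mem_Ioi]
        rw [Real.lt_sqrt (by positivity)]
        nlinarith
      · simp only [hψ]
        rw [Real.sq_sqrt (by positivity : (0:ℝ) ≤ t ^ 2 + k), add_sub_cancel_right,
          Real.sqrt_sq ht0]
  rw [← lintegral_image_1d measurableSet_Ioi hderiv hinj G, himg]
  -- Step 3 : evaluate the Gaussian tail integral
  have hGsplit : ∀ t : ℝ, G t =
      ENNReal.ofReal (2 * c / Real.pi * Real.exp (-k)) * ENNReal.ofReal (Real.exp (-t ^ 2)) := by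
    intro t
    have ht : -t ^ 2 - k = -t ^ 2 + -k := by ring
    simp only [hG, ht, Real.exp_add]
    rw [← ENNReal.ofReal_mul (by positivity)]
    congr 1
    ring
  simp_rw [hGsplit]
  rw [lintegral_const_mul _ (by fun_prop), lintegral_exp_neg_sq_Ioi (b * u),
    ← ENNReal.ofReal_mul (by positivity)]
  congr 1
  have hπ : Real.sqrt Real.pi * Real.sqrt Real.pi = Real.pi :=
    Real.mul_self_sqrt Real.pi_pos.le
  have hπ0 : (0:ℝ) < Real.pi := Real.pi_pos
  have hsπ : (0:ℝ) < Real.sqrt Real.pi := Real.sqrt_pos.mpr hπ0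
  have harg : Real.sqrt 2 * (b * u) = Real.sqrt 2 * b * u := by ring
  rw [harg, hk]
  field_simp
  linear_combination c * gaussQ (u * Real.sqrt 2 * b) * hπ

lemma wd_prod (f g : ℝ → ENNReal) (hf : Measurable f) (hg : Measurable g)
    [SigmaFinite (volume.withDensity f)] [SigmaFinite (volume.withDensity g)] :
    (volume.withDensity f).prod (volume.withDensity g) =
      (volume.prod volume).withDensity (fun z => f z.1 * g z.2) :=
  Measure.prod_eq fun s t hs ht => by
    rw [withDensity_apply _ (hs.prod ht), ← Measure.prod_restrict,
      lintegral_prod_mul hf.aemeasurable hg.aemeasurable,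
      withDensity_apply _ hs, withDensity_apply _ ht]

theorem product_density {Ω : Type*} [MeasureSpace Ω]
    [IsProbabilityMeasure (ℙ : Measure Ω)]
    (M : ℕ) (hM : 2 ≤ M)
    (r v : Ω → ℝ) (hmr : Measurable r) (hmv : Measurable v)
    (hindep : IndepFun r v ℙ)
    (hr : Measure.map r ℙ = volume.withDensity (fun x =>
      ENNReal.ofReal (if 0 ≤ x then 2 * x * Real.exp (-x ^ 2) else 0)))
    (hv : Measure.map v ℙ = volume.withDensity (fun z =>
      ENNReal.ofReal (if z ∈ Set.Icc (0 : ℝ) 1 then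
        M * Real.sin (Real.pi / M) /
          (Real.pi * Real.sqrt (1 - Real.sin (Real.pi / M) ^ 2 * z ^ 2))
      else 0))) :
    Measure.map (fun ω => r ω * v ω) ℙ = volume.withDensity (fun x =>
      ENNReal.ofReal (if 0 ≤ x then
        2 * M * Real.sin (Real.pi / M) / Real.sqrt Real.pi *
          Real.exp (-(Real.sin (Real.pi / M) ^ 2) * x ^ 2) *
          gaussQ (Real.sqrt 2 * Real.cos (Real.pi / M) * x)
      else 0)) := by
  classical
  have hM2 : (2:ℝ) ≤ M := by exact_mod_cast hM
  have hMpos : (0:ℝ) < M := by linarith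
  have hθpos : 0 < Real.pi / M := div_pos Real.pi_pos hMpos
  have hθle : Real.pi / M ≤ Real.pi / 2 := by
    apply div_le_div_of_nonneg_left Real.pi_pos.le (by norm_num) hM2
  have hθlt : Real.pi / M < Real.pi := lt_of_le_of_lt hθle (by linarith [Real.pi_pos])
  have ha : 0 < Real.sin (Real.pi / M) := Real.sin_pos_of_pos_of_lt_pi hθpos hθlt
  have hb : 0 ≤ Real.cos (Real.pi / M) := Real.cos_nonneg_of_mem_Icc ⟨by linarith, hθle⟩
  have hab : Real.sin (Real.pi / M) ^ 2 + Real.cos (Real.pi / M) ^ 2 = 1 :=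
    Real.sin_sq_add_cos_sq _
  set fr : ℝ → ENNReal := fun x =>
    ENNReal.ofReal (if 0 ≤ x then 2 * x * Real.exp (-x ^ 2) else 0) with hfr_def
  set fv : ℝ → ENNReal := fun z =>
    ENNReal.ofReal (if z ∈ Set.Icc (0 : ℝ) 1 then
      M * Real.sin (Real.pi / M) /
        (Real.pi * Real.sqrt (1 - Real.sin (Real.pi / M) ^ 2 * z ^ 2))
    else 0) with hfv_def
  have hfr_m : Measurable fr := by
    apply Measurable.ennreal_ofReal
    exact Measurable.ite measurableSet_Ici (by fun_prop) measurable_const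
  have hfv_m : Measurable fv := by
    apply Measurable.ennreal_ofReal
    apply Measurable.ite measurableSet_Icc _ measurable_const
    apply Measurable.div measurable_const
    apply Measurable.mul measurable_const
    apply Real.continuous_sqrt.measurable.comp
    fun_prop
  have hmulm : Measurable (fun p : ℝ × ℝ => p.1 * p.2) := measurable_fst.mul measurable_snd
  haveI hprob_r : IsProbabilityMeasure (volume.withDensity fr) :=
    hr ▸ Measure.isProbabilityMeasure_map hmr.aemeasurable
  haveI hprob_v : IsProbabilityMeasure (volume.withDensity fv) :=
    hv ▸ Measure.isProbabilityMeasure_map hmv.aemeasurable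
  have hmap : Measure.map (fun ω => (r ω, v ω)) ℙ =
      (volume.withDensity fr).prod (volume.withDensity fv) := by
    rw [← hr, ← hv]
    exact (indepFun_iff_map_prod_eq_prod_map_map hmr.aemeasurable hmv.aemeasurable).mp hindep
  have hcomp : (fun ω => r ω * v ω) =
      (fun p : ℝ × ℝ => p.1 * p.2) ∘ (fun ω => (r ω, v ω)) := rfl
  rw [hcomp, ← Measure.map_map hmulm (hmr.prodMk hmv), hmap, wd_prod fr fv hfr_m hfv_m]
  ext s hs
  have hpre : MeasurableSet ((fun p : ℝ × ℝ => p.1 * p.2) ⁻¹' s) := hs.preimage hmulm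
  rw [Measure.map_apply hmulm hs, withDensity_apply _ hpre, withDensity_apply _ hs,
    ← lintegral_indicator hpre]
  have hF_m : Measurable (((fun p : ℝ × ℝ => p.1 * p.2) ⁻¹' s).indicator
      (fun p : ℝ × ℝ => fr p.1 * fv p.2)) :=
    ((hfr_m.comp measurable_fst).mul (hfv_m.comp measurable_snd)).indicator hpre
  rw [lintegral_prod _ hF_m.aemeasurable]
  -- rewrite the inner integral using the scaling substitution y ↦ u / x
  have key1 : ∀ x : ℝ,
      (∫⁻ y, ((fun p : ℝ × ℝ => p.1 * p.2) ⁻¹' s).indicator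
        (fun p : ℝ × ℝ => fr p.1 * fv p.2) (x, y)) =
      ∫⁻ u, s.indicator (fun _ => (1 : ENNReal)) u *
        (fr x * (ENNReal.ofReal x⁻¹ * fv (u / x))) := by
    intro x
    rcases le_or_gt x 0 with hx | hx
    · have hfrx : fr x = 0 := by
        rcases lt_or_eq_of_le hx with hx' | hx'
        · simp [hfr_def, if_neg (not_le.mpr hx')]
        · subst hx'
          norm_num [hfr_def]
      have h1 : ∀ y : ℝ, ((fun p : ℝ × ℝ => p.1 * p.2) ⁻¹' s).indicator
          (fun p : ℝ × ℝ => fr p.1 * fv p.2) (x, y) = 0 := by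
        intro y
        simp [Set.indicator_apply, hfrx]
      have h2 : ∀ u : ℝ, s.indicator (fun _ => (1 : ENNReal)) u *
          (fr x * (ENNReal.ofReal x⁻¹ * fv (u / x))) = 0 := by
        intro u
        simp [hfrx]
      simp only [h1, h2, lintegral_zero]
    · have hx0 : x ≠ 0 := ne_of_gt hx
      have hmapx := Real.map_volume_mul_left hx0
      set h : ℝ → ENNReal := fun u =>
        s.indicator (fun _ => (1 : ENNReal)) u * fv (u / x) with hh
      have hhm : Measurable h :=
        (measurable_const.indicator hs).mul (hfv_m.comp (measurable_id.div_const x))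
      have heq : ∀ y : ℝ, ((fun p : ℝ × ℝ => p.1 * p.2) ⁻¹' s).indicator
          (fun p : ℝ × ℝ => fr p.1 * fv p.2) (x, y) = fr x * h (x * y) := by
        intro y
        simp only [hh, Set.indicator_apply, Set.mem_preimage, mul_div_cancel_left₀ _ hx0]
        by_cases hxy : x * y ∈ s <;> simp [hxy]
      calc (∫⁻ y, ((fun p : ℝ × ℝ => p.1 * p.2) ⁻¹' s).indicator
            (fun p : ℝ × ℝ => fr p.1 * fv p.2) (x, y))
          = ∫⁻ y, fr x * h (x * y) := by simp_rw [heq]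
        _ = fr x * ∫⁻ y, h (x * y) := lintegral_const_mul _ (hhm.comp (measurable_const_mul x))
        _ = fr x * ∫⁻ u, h u ∂(Measure.map (x * ·) volume) := by
            rw [lintegral_map hhm (measurable_const_mul x)]
        _ = fr x * (ENNReal.ofReal |x⁻¹| * ∫⁻ u, h u) := by
            rw [hmapx, lintegral_smul_measure, smul_eq_mul]
        _ = ∫⁻ u, s.indicator (fun _ => (1 : ENNReal)) u *
              (fr x * (ENNReal.ofReal x⁻¹ * fv (u / x))) := by
            rw [abs_of_nonneg (inv_nonneg.mpr hx.le),
              ← lintegral_const_mul _ hhm, ← lintegral_const_mul _ (hhm.const_mul _)]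
            exact lintegral_congr fun u => by simp only [hh]; ring
  rw [lintegral_congr key1]
  have hpair_m : Measurable (fun p : ℝ × ℝ => s.indicator (fun _ => (1 : ENNReal)) p.2 *
      (fr p.1 * (ENNReal.ofReal p.1⁻¹ * fv (p.2 / p.1)))) := by
    apply Measurable.mul ((measurable_const.indicator hs).comp measurable_snd)
    apply Measurable.mul (hfr_m.comp measurable_fst)
    exact (measurable_fst.inv.ennreal_ofReal).mul
      (hfv_m.comp (measurable_snd.div measurable_fst))
  rw [lintegral_lintegral_swap hpair_m.aemeasurable]
  rw [← lintegral_indicator hs]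
  apply lintegral_congr_ae
  have h0 : ∀ᵐ u : ℝ, u ≠ 0 := by
    rw [ae_iff]
    have : {u : ℝ | ¬ u ≠ 0} = {0} := by ext; simp
    rw [this]; exact Real.volume_singleton
  filter_upwards [h0] with u hu
  have hx_m : Measurable (fun x : ℝ => fr x * (ENNReal.ofReal x⁻¹ * fv (u / x))) := by
    apply hfr_m.mul
    exact (measurable_inv.ennreal_ofReal).mul (hfv_m.comp (measurable_const.div measurable_id))
  rw [lintegral_const_mul _ hx_m]
  rcases lt_or_gt_of_ne hu with huneg | hupos
  · -- u < 0 : both sides vanish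
    have hz : ∀ x : ℝ, fr x * (ENNReal.ofReal x⁻¹ * fv (u / x)) = 0 := by
      intro x
      rcases le_or_gt x 0 with hx | hx
      · rcases lt_or_eq_of_le hx with hx' | hx'
        · simp [hfr_def, if_neg (not_le.mpr hx')]
        · subst hx'
          norm_num [hfr_def]
      · have hlt : u / x < 0 := div_neg_of_neg_of_pos huneg hx
        have hnm : u / x ∉ Set.Icc (0:ℝ) 1 :=
          fun hc => absurd (Set.mem_Icc.mp hc).1 (not_le.mpr hlt)
        have hfz : fv (u / x) = 0 := by
          simp only [hfv_def]
          rw [if_neg hnm, ENNReal.ofReal_zero]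
        simp [hfz]
    simp only [hz, lintegral_zero, mul_zero]
    by_cases hus : u ∈ s
    · rw [Set.indicator_of_mem hus, if_neg (not_le.mpr huneg), ENNReal.ofReal_zero]
    · rw [Set.indicator_of_notMem hus]
  · -- u > 0 : the key computation
    have hcalc := inner_calc ((M : ℝ) * Real.sin (Real.pi / M)) (Real.sin (Real.pi / M))
      (Real.cos (Real.pi / M)) u (by positivity) ha hb hab hupos
    rw [hfr_def, hfv_def, hcalc]
    by_cases hus : u ∈ s
    · rw [Set.indicator_of_mem hus, Set.indicator_of_mem hus, one_mul, if_pos hupos.le]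
      congr 1
      ring
    · rw [Set.indicator_of_notMem hus, Set.indicator_of_notMem hus, zero_mul]
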